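/- Let V, f₁, f₂ : (-∞,0] → M_n(ℂ) be continuous, bounded, Hermitian-matrix-valued with f₁(x) positive definite and f₂(x) positive semidefinite for all x, let c ∈ M_n(ℂ) be Hermitian, and let φ be an M_n(ℂ)-valued function defined for Re λ ≥ 0 such that for every λ with Re λ ≥ 0 and Im λ ≠ 0, the Hermitian matrix (sign Im λ)·(φ(λ) − φ(λ)*)/(2i) is negative semidefinite. If λ = a + ib with a ≥ 0 is an eigenvalue, i.e. there exists a nonzero H²-solution y on (-∞,0] of y″ + V y = λ f₁ y + λ² f₂ y with (c + φ(λ))y(0) = y′(0), then b = 0, i.e. λ ∈ ℝ. -/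

import Mathlib

open MeasureTheory Matrix Set
open scoped ComplexOrder

noncomputable section

/-- Action of a complex `n × n` matrix on `ℂⁿ` with the Euclidean structure. -/
def mact {n : ℕ} (M : Matrix (Fin n) (Fin n) ℂ) (v : EuclideanSpace ℂ (Fin n)) :
    EuclideanSpace ℂ (Fin n) :=
  Matrix.toEuclideanCLM (𝕜 := ℂ) M v

/-- The Hermitian "imaginary part" `Im M = (M - M*) / (2i)` of a matrix. -/
def imPart {n : ℕ} (M : Matrix (Fin n) (Fin n) ℂ) : Matrix (Fin n) (Fin n) ℂ :=
  (2 * Complex.I)⁻¹ • (M - Mᴴ)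

namespace HalflineAux

variable {n : ℕ}

lemma mact_inner (M : Matrix (Fin n) (Fin n) ℂ) (v : EuclideanSpace ℂ (Fin n)) :
    (inner ℂ v (mact M v) : ℂ)
      = dotProduct (star (WithLp.equiv 2 _ v)) (M *ᵥ (WithLp.equiv 2 _ v)) := by
  rw [EuclideanSpace.inner_eq_star_dotProduct, dotProduct_comm]
  rfl

lemma inner_mact_conjTranspose_self (M : Matrix (Fin n) (Fin n) ℂ)
    (v : EuclideanSpace ℂ (Fin n)) :
    (inner ℂ v (mact Mᴴ v) : ℂ) = (starRingEnd ℂ) (inner ℂ v (mact M v) : ℂ) := by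
  have h1 : mact Mᴴ v = (ContinuousLinearMap.adjoint (Matrix.toEuclideanCLM (𝕜 := ℂ) M)) v := by
    rw [← ContinuousLinearMap.star_eq_adjoint, ← map_star]
    rfl
  rw [h1, ContinuousLinearMap.adjoint_inner_right, ← inner_conj_symm]
  rfl

lemma im_inner_mact (M : Matrix (Fin n) (Fin n) ℂ) (hM : M.IsHermitian)
    (v : EuclideanSpace ℂ (Fin n)) : (inner ℂ v (mact M v) : ℂ).im = 0 := by
  have h := inner_mact_conjTranspose_self M v
  rw [hM.eq] at h
  exact Complex.conj_eq_iff_im.mp h.symm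

lemma re_inner_mact_nonneg {M : Matrix (Fin n) (Fin n) ℂ} (hM : M.PosSemidef)
    (v : EuclideanSpace ℂ (Fin n)) : 0 ≤ (inner ℂ v (mact M v) : ℂ).re := by
  rw [mact_inner]
  simpa using hM.re_dotProduct_nonneg (WithLp.equiv 2 _ v)

lemma re_inner_mact_pos {M : Matrix (Fin n) (Fin n) ℂ} (hM : M.PosDef)
    {v : EuclideanSpace ℂ (Fin n)} (hv : v ≠ 0) : 0 < (inner ℂ v (mact M v) : ℂ).re := by
  rw [mact_inner]
  have hv' : (WithLp.equiv 2 (Fin n → ℂ)) v ≠ 0 := by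
    intro h
    exact hv ((WithLp.equiv 2 (Fin n → ℂ)).injective (by simpa using h))
  simpa using hM.re_dotProduct_pos hv'

lemma inner_mact_imPart (M : Matrix (Fin n) (Fin n) ℂ) (v : EuclideanSpace ℂ (Fin n)) :
    (inner ℂ v (mact (imPart M) v) : ℂ) = ((inner ℂ v (mact M v) : ℂ).im : ℂ) := by
  have hstar := inner_mact_conjTranspose_self M v
  rw [mact_inner, mact_inner] at hstar
  have h2 : (inner ℂ v (mact (imPart M) v) : ℂ)
      = (2 * Complex.I)⁻¹ * ((inner ℂ v (mact M v) : ℂ)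
          - (starRingEnd ℂ) (inner ℂ v (mact M v) : ℂ)) := by
    rw [mact_inner, imPart, Matrix.smul_mulVec, Matrix.sub_mulVec, dotProduct_smul,
      dotProduct_sub, smul_eq_mul, hstar, mact_inner]
  rw [h2, Complex.sub_conj]
  have hI : (2 * Complex.I) ≠ 0 := by simp [Complex.I_ne_zero]
  field_simp
  push_cast
  ring

end HalflineAux

open HalflineAux

/-- under the sign condition on `Im φ`, eigenvalues of the half-line Robin
problem with nonnegative real part are real. -/
theorem halfline_robin_unstable_eigenvalues_real {n : ℕ} (hn : 1 ≤ n)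
    (V f₁ f₂ : ℝ → Matrix (Fin n) (Fin n) ℂ)
    (hVcont : ContinuousOn V (Iic 0))
    (hf₁cont : ContinuousOn f₁ (Iic 0))
    (hf₂cont : ContinuousOn f₂ (Iic 0))
    (hbdd : ∃ C : ℝ, ∀ x ∈ Iic (0 : ℝ),
      ‖Matrix.toEuclideanCLM (𝕜 := ℂ) (V x)‖ ≤ C ∧
      ‖Matrix.toEuclideanCLM (𝕜 := ℂ) (f₁ x)‖ ≤ C ∧
      ‖Matrix.toEuclideanCLM (𝕜 := ℂ) (f₂ x)‖ ≤ C)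
    (hVherm : ∀ x ∈ Iic (0 : ℝ), (V x).IsHermitian)
    (hf₁herm : ∀ x ∈ Iic (0 : ℝ), (f₁ x).IsHermitian)
    (hf₂herm : ∀ x ∈ Iic (0 : ℝ), (f₂ x).IsHermitian)
    (hf₁pos : ∀ x ∈ Iic (0 : ℝ), (f₁ x).PosDef)
    (hf₂pos : ∀ x ∈ Iic (0 : ℝ), (f₂ x).PosSemidef)
    (c : Matrix (Fin n) (Fin n) ℂ) (hc : c.IsHermitian)
    (φ : ℂ → Matrix (Fin n) (Fin n) ℂ)
    (hφ : ∀ lam : ℂ, 0 ≤ lam.re → lam.im ≠ 0 →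
      (-((Real.sign lam.im : ℂ) • imPart (φ lam))).PosSemidef)
    (lam : ℂ) (hlam : 0 ≤ lam.re)
    (y y' y'' : ℝ → EuclideanSpace ℂ (Fin n))
    (hyne : ∃ x ∈ Iic (0 : ℝ), y x ≠ 0)
    (hy1 : ∀ x ∈ Iic (0 : ℝ), HasDerivWithinAt y (y' x) (Iic 0) x)
    (hy2 : ∀ x ∈ Iic (0 : ℝ), HasDerivWithinAt y' (y'' x) (Iic 0) x)
    (hycont : ContinuousOn y'' (Iic 0))
    (hyL2 : Integrable (fun x => ‖y x‖ ^ 2) (volume.restrict (Iic 0)))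
    (hy'L2 : Integrable (fun x => ‖y' x‖ ^ 2) (volume.restrict (Iic 0)))
    (hy''L2 : Integrable (fun x => ‖y'' x‖ ^ 2) (volume.restrict (Iic 0)))
    (heqn : ∀ x ∈ Iic (0 : ℝ), y'' x + mact (V x) (y x)
        = lam • mact (f₁ x) (y x) + lam ^ 2 • mact (f₂ x) (y x))
    (hbc : mact (c + φ lam) (y 0) = y' 0) :
    lam.im = 0 := by
  by_contra hb
  -- sign of the imaginary part
  set s : ℝ := Real.sign lam.im with hs
  have hsb : 0 < s * lam.im := by
    rcases lt_or_gt_of_ne hb with h | h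
    · rw [hs, Real.sign_of_neg h]; nlinarith
    · rw [hs, Real.sign_of_pos h]; nlinarith
  have hs1 : |s| ≤ 1 := by
    rcases lt_or_gt_of_ne hb with h | h
    · rw [hs, Real.sign_of_neg h]; norm_num
    · rw [hs, Real.sign_of_pos h]; norm_num
  -- the key scalar functions
  set h : ℝ → ℝ := fun x => s * (inner ℂ (y x) (y' x) : ℂ).im with hh
  set A : ℝ → ℝ := fun x => (s * lam.im) *
    ((inner ℂ (y x) (mact (f₁ x) (y x)) : ℂ).re
      + 2 * lam.re * (inner ℂ (y x) (mact (f₂ x) (y x)) : ℂ).re) with hA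
  -- derivative of h
  have key : ∀ x ∈ Iic (0 : ℝ), HasDerivWithinAt h (A x) (Iic 0) x := by
    intro x hx
    have hg : HasDerivWithinAt (fun t => (inner ℂ (y t) (y' t) : ℂ))
        (inner ℂ (y x) (y'' x) + inner ℂ (y' x) (y' x)) (Iic 0) x :=
      (hy1 x hx).inner ℂ (hy2 x hx)
    have h1 : HasDerivWithinAt (fun t => (inner ℂ (y t) (y' t) : ℂ).im)
        (((inner ℂ (y x) (y'' x) : ℂ) + (inner ℂ (y' x) (y' x) : ℂ)).im) (Iic 0) x :=
      (Complex.imCLM.hasFDerivAt).comp_hasDerivWithinAt x hg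
    have h2 := h1.const_mul s
    have heq : s * ((inner ℂ (y x) (y'' x) : ℂ) + (inner ℂ (y' x) (y' x) : ℂ)).im = A x := by
      have he : y'' x = lam • mact (f₁ x) (y x) + lam ^ 2 • mact (f₂ x) (y x)
          - mact (V x) (y x) := eq_sub_of_add_eq (heqn x hx)
      have hz1 := im_inner_mact (f₁ x) (hf₁herm x hx) (y x)
      have hz2 := im_inner_mact (f₂ x) (hf₂herm x hx) (y x)
      have hzV := im_inner_mact (V x) (hVherm x hx) (y x)
      have hself : (inner ℂ (y' x) (y' x) : ℂ).im = 0 := inner_self_im (𝕜 := ℂ) (y' x)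
      rw [he, inner_sub_right, inner_add_right, inner_smul_right, inner_smul_right]
      simp only [hA, Complex.add_im, Complex.sub_im, Complex.mul_im, hz1, hz2, hzV, hself,
        pow_two, Complex.mul_re, Complex.mul_im]
      ring
    exact heq ▸ h2
  -- nonnegativity of A, positivity where y ≠ 0
  have hAnonneg : ∀ x ∈ Iic (0 : ℝ), 0 ≤ A x := by
    intro x hx
    have h1 := re_inner_mact_nonneg (hf₁pos x hx).posSemidef (y x)
    have h2 := re_inner_mact_nonneg (hf₂pos x hx) (y x)
    have : (0:ℝ) ≤ lam.re := hlam
    simp only [hA]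
    exact mul_nonneg hsb.le (by nlinarith)
  have hApos : ∀ x ∈ Iic (0 : ℝ), y x ≠ 0 → 0 < A x := by
    intro x hx hyx
    have h1 := re_inner_mact_pos (hf₁pos x hx) hyx
    have h2 := re_inner_mact_nonneg (hf₂pos x hx) (y x)
    have : (0:ℝ) ≤ lam.re := hlam
    simp only [hA]
    exact mul_pos hsb (by nlinarith)
  -- continuity of h on Iic 0
  have hycontOn : ContinuousOn y (Iic 0) := fun x hx => (hy1 x hx).continuousWithinAt
  have hy'contOn : ContinuousOn y' (Iic 0) := fun x hx => (hy2 x hx).continuousWithinAt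
  have hgcont : ContinuousOn (fun x => (inner ℂ (y x) (y' x) : ℂ)) (Iic 0) :=
    ContinuousOn.inner hycontOn hy'contOn
  have hhcont : ContinuousOn h (Iic 0) :=
    continuousOn_const.mul (Complex.continuous_im.comp_continuousOn hgcont)
  -- monotonicity of h on Iic 0
  have hmono : MonotoneOn h (Iic 0) := by
    apply monotoneOn_of_deriv_nonneg (convex_Iic 0) hhcont
    · intro x hx
      rw [interior_Iic] at hx
      exact ((key x (mem_Iic.mpr hx.le)).hasDerivAt (Iic_mem_nhds hx)).differentiableAt.differentiableWithinAt
    · intro x hx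
      rw [interior_Iic] at hx
      rw [((key x (mem_Iic.mpr hx.le)).hasDerivAt (Iic_mem_nhds hx)).deriv]
      exact hAnonneg x (mem_Iic.mpr hx.le)
  -- boundary sign: h 0 ≤ 0
  have h0le : h 0 ≤ 0 := by
    have hzero : (0:ℝ) ∈ Iic (0:ℝ) := mem_Iic.mpr le_rfl
    have him : (inner ℂ (y 0) (y' 0) : ℂ).im = (inner ℂ (y 0) (mact (φ lam) (y 0)) : ℂ).im := by
      rw [← hbc]
      have hsplit : (inner ℂ (y 0) (mact (c + φ lam) (y 0)) : ℂ)
          = (inner ℂ (y 0) (mact c (y 0)) : ℂ) + (inner ℂ (y 0) (mact (φ lam) (y 0)) : ℂ) := by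
        rw [mact_inner, mact_inner, mact_inner, Matrix.add_mulVec, dotProduct_add]
      rw [hsplit, Complex.add_im, im_inner_mact c hc (y 0), zero_add]
    have hpsd := hφ lam hlam hb
    have hre := re_inner_mact_nonneg hpsd (y 0)
    have hNinner : (inner ℂ (y 0) (mact (-((s : ℂ) • imPart (φ lam))) (y 0)) : ℂ)
        = -((s : ℂ) * (inner ℂ (y 0) (mact (imPart (φ lam)) (y 0)) : ℂ)) := by
      rw [mact_inner, mact_inner, Matrix.neg_mulVec, Matrix.smul_mulVec,
        dotProduct_neg, dotProduct_smul, smul_eq_mul]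
    rw [hNinner, inner_mact_imPart] at hre
    have : 0 ≤ -(s * (inner ℂ (y 0) (mact (φ lam) (y 0)) : ℂ).im) := by
      simpa using hre
    simp only [hh, him]
    linarith
  -- find a point x₀ < 0 where y is nonzero
  obtain ⟨xs, hxs, hyxs⟩ := hyne
  have hx0 : ∃ x₀ : ℝ, x₀ < 0 ∧ y x₀ ≠ 0 := by
    rcases (mem_Iic.mp hxs).lt_or_eq with hlt | heq0
    · exact ⟨xs, hlt, hyxs⟩
    · have hcw : ContinuousWithinAt y (Iic 0) 0 := (hy1 0 (mem_Iic.mpr le_rfl)).continuousWithinAt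
      have hcw' : Filter.Tendsto y (nhdsWithin (0:ℝ) (Iio 0)) (nhds (y 0)) :=
        hcw.mono_left (nhdsWithin_mono 0 Iio_subset_Iic_self)
      have hy0 : y 0 ≠ 0 := heq0 ▸ hyxs
      have hev : ∀ᶠ z in nhdsWithin (0:ℝ) (Iio 0), y z ≠ 0 :=
        hcw' (isOpen_ne.mem_nhds hy0)
      obtain ⟨z, hz1, hz2⟩ := (hev.and eventually_mem_nhdsWithin).exists
      exact ⟨z, hz2, hz1⟩
  obtain ⟨x₀, hx₀0, hyx₀⟩ := hx0
  -- a ball around x₀ where y is nonzero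
  have hca : ContinuousAt y x₀ :=
    ((hy1 x₀ (mem_Iic.mpr hx₀0.le)).hasDerivAt (Iic_mem_nhds hx₀0)).continuousAt
  have hev : y ⁻¹' {w | w ≠ 0} ∈ nhds x₀ := hca (isOpen_ne.mem_nhds hyx₀)
  obtain ⟨ε, hε, hball⟩ := Metric.mem_nhds_iff.mp hev
  set ε2 : ℝ := min ε (-x₀) with hε2def
  have hε2 : 0 < ε2 := lt_min hε (by linarith)
  set u : ℝ := x₀ - ε2 / 2 with hu
  set v : ℝ := x₀ + ε2 / 2 with hv
  have huv : u < v := by rw [hu, hv]; linarith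
  have hv0 : v < 0 := by
    have : ε2 ≤ -x₀ := min_le_right _ _
    rw [hv]; linarith
  have hu0 : u ≤ 0 := by linarith
  have hIccsub : Icc u v ⊆ Iic 0 := fun z hz => le_trans hz.2 hv0.le
  have hyne' : ∀ z ∈ Ioo u v, y z ≠ 0 := by
    intro z hz
    apply hball
    rw [Metric.mem_ball, Real.dist_eq]
    have h1 : ε2 ≤ ε := min_le_left _ _
    rw [hu] at hz; rw [hv] at hz
    rw [abs_lt]
    constructor <;> [linarith [hz.1]; linarith [hz.2]]
  -- strict monotonicity on Icc u v
  have hsm : StrictMonoOn h (Icc u v) := by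
    apply strictMonoOn_of_deriv_pos (convex_Icc u v) (hhcont.mono hIccsub)
    intro x hx
    rw [interior_Icc] at hx
    have hxlt : x < 0 := lt_of_lt_of_le hx.2 hv0.le
    rw [((key x (mem_Iic.mpr hxlt.le)).hasDerivAt (Iic_mem_nhds hxlt)).deriv]
    exact hApos x (mem_Iic.mpr hxlt.le) (hyne' x hx)
  have hulthv : h u < h v :=
    hsm (left_mem_Icc.mpr huv.le) (right_mem_Icc.mpr huv.le) huv
  have hhv0 : h v ≤ h 0 := hmono (mem_Iic.mpr hv0.le) (mem_Iic.mpr le_rfl) hv0.le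
  have huneg : h u < 0 := lt_of_lt_of_le hulthv (le_trans hhv0 h0le)
  -- integrability of h
  have hbound : ∀ x : ℝ, ‖h x‖ ≤ ‖y x‖ ^ 2 + ‖y' x‖ ^ 2 := by
    intro x
    have h1 : |(inner ℂ (y x) (y' x) : ℂ).im| ≤ ‖(inner ℂ (y x) (y' x) : ℂ)‖ := by
      exact Complex.abs_im_le_norm _
    have h2 : ‖(inner ℂ (y x) (y' x) : ℂ)‖ ≤ ‖y x‖ * ‖y' x‖ := norm_inner_le_norm _ _
    have h3 : ‖h x‖ = |s| * |(inner ℂ (y x) (y' x) : ℂ).im| := by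
      simp only [hh]; rw [Real.norm_eq_abs, abs_mul]
    have h4 : ‖y x‖ * ‖y' x‖ ≤ ‖y x‖ ^ 2 + ‖y' x‖ ^ 2 := by
      nlinarith [sq_nonneg (‖y x‖ - ‖y' x‖), sq_nonneg (‖y x‖ + ‖y' x‖)]
    have h5 : |s| * |(inner ℂ (y x) (y' x) : ℂ).im| ≤ |(inner ℂ (y x) (y' x) : ℂ).im| :=
      mul_le_of_le_one_left (abs_nonneg _) hs1
    linarith
  have hInt : Integrable h (volume.restrict (Iic 0)) := by
    apply Integrable.mono' (hyL2.add hy'L2)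
      (hhcont.aestronglyMeasurable measurableSet_Iic)
    exact Filter.Eventually.of_forall hbound
  have hIntu : Integrable h (volume.restrict (Iic u)) :=
    hInt.mono_measure (Measure.restrict_mono (Iic_subset_Iic.mpr hu0) le_rfl)
  -- constant lower bound contradiction
  set δ : ℝ := -h u with hδdef
  have hδ : 0 < δ := by rw [hδdef]; linarith
  have hconst : Integrable (fun _ : ℝ => δ) (volume.restrict (Iic u)) := by
    apply Integrable.mono' hIntu.norm aestronglyMeasurable_const
    rw [ae_restrict_iff' measurableSet_Iic]
    apply Filter.Eventually.of_forall
    intro x hx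
    have hx0' : x ∈ Iic (0:ℝ) := mem_Iic.mpr (le_trans hx hu0)
    have hmx : h x ≤ h u := hmono hx0' (mem_Iic.mpr hu0) hx
    have : δ ≤ -h x := by rw [hδdef]; linarith
    calc ‖δ‖ = δ := by rw [Real.norm_eq_abs, abs_of_pos hδ]
    _ ≤ -h x := this
    _ ≤ |h x| := neg_le_abs _
    _ = ‖h x‖ := (Real.norm_eq_abs _).symm
  rcases integrable_const_iff.mp hconst with h1 | h2
  · exact absurd h1 hδ.ne'
  · rw [isFiniteMeasure_restrict, Real.volume_Iic] at h2
    exact absurd h2 (by simp)
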